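/- Let A = ⊕_{i≥0} A_i be a finitely generated graded semiprime algebra over a field F, generated by V = F + A_1 + ⋯ + A_p, with growth function γ(n) = dim_F (⊕_{i=0}^{pn} A_i). Then for all m, t, N, s ∈ ℕ with t, s ≥ 1: γ(m+t) − γ(m) ≤ (γ(N+s) − γ(N)) · (γ(N+m+t+s) − γ(N+m)). -/

import Mathlib

open Module Submodule DirectSum

section AuxStmt11
variable {F A : Type*} [Field F] [Ring A] [Algebra F A]
  (𝒜 : ℕ → Submodule F A) [GradedAlgebra 𝒜]

private lemma aux_graded_mul' {i j : ℕ} : 𝒜 i * 𝒜 j ≤ 𝒜 (i + j) :=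
  Submodule.mul_le.2 fun _ hx _ hy => SetLike.mul_mem_graded hx hy

private lemma aux_rank_finset_sup [∀ i, FiniteDimensional F (𝒜 i)] (s : Finset ℕ) :
    Module.finrank F (s.sup 𝒜 : Submodule F A) = ∑ i ∈ s, Module.finrank F (𝒜 i) := by
  classical
  induction s using Finset.induction_on with
  | empty => simp
  | @insert a s ha ih =>
    have hdisj : Disjoint (𝒜 a) (s.sup 𝒜) := by
      have hind := (DirectSum.Decomposition.isInternal 𝒜).submodule_iSupIndep
      have := hind.disjoint_biSup (y := (↑s : Set ℕ)) (by simpa using ha)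
      simpa [Finset.sup_eq_iSup] using this
    have h1 := Submodule.finrank_sup_add_finrank_inf_eq (𝒜 a) (s.sup 𝒜)
    rw [hdisj.eq_bot] at h1
    simp only [finrank_bot, add_zero] at h1
    rw [Finset.sup_insert, Finset.sum_insert ha, h1, ih]

private lemma aux_sup_mul_sup (s t u : Finset ℕ) (h : ∀ i ∈ s, ∀ j ∈ t, i + j ∈ u) :
    (s.sup 𝒜) * (t.sup 𝒜) ≤ u.sup 𝒜 := by
  rw [Finset.sup_eq_iSup, Finset.sup_eq_iSup]
  simp_rw [Submodule.iSup_mul, Submodule.mul_iSup]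
  exact iSup₂_le fun i hi => iSup₂_le fun j hj =>
    le_trans (aux_graded_mul' 𝒜) (Finset.le_sup (h i hi j hj))

set_option synthInstance.maxHeartbeats 1000000 in
set_option maxHeartbeats 1000000 in
private lemma aux_gen_decomp (p : ℕ) (hp : 1 ≤ p)
    (hgen : Algebra.adjoin F (⋃ i ∈ Set.Icc 1 p, (𝒜 i : Set A)) = ⊤) :
    ∀ j, p + 1 ≤ j → 𝒜 j ≤ ⨆ k ∈ Finset.Icc 1 p, 𝒜 k * 𝒜 (j - k) := by
  classical
  set D : ℕ → Submodule F A := fun n => ⨆ k ∈ Finset.Icc 1 p, 𝒜 k * 𝒜 (n - k) with hDdef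
  have hle : ∀ n k, k ∈ Finset.Icc 1 p → 𝒜 k * 𝒜 (n - k) ≤ D n := fun n k hk =>
    le_iSup₂ (f := fun k (_ : k ∈ Finset.Icc 1 p) => 𝒜 k * 𝒜 (n - k)) k hk
  have h0 : ∀ n, 𝒜 0 * D n ≤ D n := by
    intro n
    rw [hDdef]
    simp_rw [Submodule.mul_iSup]
    refine iSup₂_le fun k hk => ?_
    rw [← mul_assoc]
    exact le_trans (mul_le_mul_left
      (le_trans (aux_graded_mul' 𝒜) (by rw [zero_add])) _) (hle n k hk)
  have hDmul : ∀ i k, p ≤ i → D i * 𝒜 k ≤ D (i + k) := by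
    intro i k hpi
    conv_lhs => rw [hDdef]
    simp_rw [Submodule.iSup_mul]
    refine iSup₂_le fun k' hk' => ?_
    have e : i - k' + k = i + k - k' := by
      simp only [Finset.mem_Icc] at hk'; omega
    rw [mul_assoc]
    refine le_trans (mul_le_mul_right
      (le_trans (aux_graded_mul' 𝒜) (by rw [e])) _) (hle (i + k) k' hk')
  let S : Subalgebra F A :=
  { carrier := {x | ∀ j, p + 1 ≤ j → (DirectSum.decompose 𝒜 x j : A) ∈ D j}
    zero_mem' := by
      intro j hj; simp only [DirectSum.decompose_zero, DirectSum.zero_apply,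
        ZeroMemClass.coe_zero]; exact zero_mem _
    add_mem' := by
      intro x y hx hy j hj
      simp only [DirectSum.decompose_add, DirectSum.add_apply, Submodule.coe_add]
      exact add_mem (hx j hj) (hy j hj)
    one_mem' := by
      intro j hj
      rw [DirectSum.decompose_of_mem_ne 𝒜 (SetLike.one_mem_graded 𝒜) (by omega : (0:ℕ) ≠ j)]
      exact zero_mem _
    mul_mem' := by
      intro x y hx hy j hj
      rw [DirectSum.decompose_mul, DirectSum.coe_mul_apply 𝒜]
      refine Submodule.sum_mem _ fun ij hij => ?_
      simp only [Finset.mem_filter, Finset.mem_product] at hij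
      obtain ⟨i, k⟩ := ij
      obtain ⟨-, hsum⟩ := hij
      simp only at hsum ⊢
      rcases Nat.lt_or_ge i 1 with hi | hi
      · have hi0 : i = 0 := by omega
        have hkj : k = j := by omega
        subst hi0; subst hkj
        exact h0 k (Submodule.mul_mem_mul (SetLike.coe_mem _) (hy k hj))
      rcases le_or_gt i p with hip | hip
      · have hk : k = j - i := by omega
        exact hle j i (Finset.mem_Icc.2 ⟨hi, hip⟩)
          (Submodule.mul_mem_mul (SetLike.coe_mem _) (hk ▸ SetLike.coe_mem _))
      · have := hDmul i k (by omega)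
        rw [hsum] at this
        exact this (Submodule.mul_mem_mul (hx i (by omega)) (SetLike.coe_mem _))
    algebraMap_mem' := by
      intro c j hj
      rw [DirectSum.decompose_of_mem_ne 𝒜 (SetLike.algebraMap_mem_graded 𝒜 c)
        (by omega : (0:ℕ) ≠ j)]
      exact zero_mem _ }
  have hS : ∀ x : A, x ∈ S := by
    intro x
    have hTS : (⊤ : Subalgebra F A) ≤ S := by
      rw [← hgen]
      refine Algebra.adjoin_le ?_
      intro z hz
      simp only [Set.mem_iUnion, Set.mem_Icc] at hz
      obtain ⟨i, hi, hzi⟩ := hz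
      intro j hj
      rw [DirectSum.decompose_of_mem_ne 𝒜 hzi (by omega : i ≠ j)]
      exact zero_mem _
    exact hTS trivial
  intro j hj y hy
  have hmem := hS y j hj
  rwa [DirectSum.decompose_of_mem_same 𝒜 hy] at hmem

private lemma aux_G_mul (n₁ n₂ : ℕ) :
    (⨆ i, ⨆ (_ : n₁ ≤ i), 𝒜 i) * (⨆ i, ⨆ (_ : n₂ ≤ i), 𝒜 i) ≤
      (⨆ i, ⨆ (_ : n₁ + n₂ ≤ i), 𝒜 i : Submodule F A) := by
  simp_rw [Submodule.iSup_mul, Submodule.mul_iSup]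
  exact iSup₂_le fun i hi => iSup₂_le fun j hj =>
    le_trans (aux_graded_mul' 𝒜) (le_iSup₂ (f := fun k (_ : n₁ + n₂ ≤ k) => 𝒜 k) (i + j) (by omega))

private lemma aux_top_le_G0 : (⊤ : Submodule F A) ≤ ⨆ i, ⨆ (_ : 0 ≤ i), 𝒜 i := by
  have h : (⊤ : Submodule F A) = ⨆ i, 𝒜 i :=
    (DirectSum.Decomposition.isInternal 𝒜).submodule_iSup_eq_top.symm
  rw [h]
  exact iSup_le fun i => le_iSup₂ (f := fun k (_ : 0 ≤ k) => 𝒜 k) i (Nat.zero_le i)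

private lemma aux_semiprime_kill
    (hsemiprime : ∀ a : A, (∀ x : A, a * x * a = 0) → a = 0)
    (a : A) (K : ℕ) (hK : 1 ≤ K)
    (ha1 : a ∈ (⨆ i, ⨆ (_ : 1 ≤ i), 𝒜 i : Submodule F A))
    (hann : ∀ j, K ≤ j → ∀ y ∈ 𝒜 j, y * a = 0) : a = 0 := by
  set G : ℕ → Submodule F A := fun n => ⨆ i, ⨆ (_ : n ≤ i), 𝒜 i with hGdef
  have hG0 : (⊤ : Submodule F A) ≤ G 0 := aux_top_le_G0 𝒜
  have hGmul : ∀ n₁ n₂, G n₁ * G n₂ ≤ G (n₁ + n₂) := fun n₁ n₂ => aux_G_mul 𝒜 n₁ n₂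
  have htopmul : ∀ n, ⊤ * G n ≤ G n := fun n =>
    le_trans (mul_le_mul_left hG0 _) (by simpa using hGmul 0 n)
  have hmultop : ∀ n, G n * ⊤ ≤ G n := fun n =>
    le_trans (mul_le_mul_right hG0 _) (by simpa using hGmul n 0)
  set L : Submodule F A := ⊤ * Submodule.span F {a} with hLdef
  have hLa : Submodule.span F {a} ≤ G 1 := by
    rw [Submodule.span_le, Set.singleton_subset_iff]; exact ha1
  have hL : L ≤ G 1 := le_trans (mul_le_mul_right hLa _) (htopmul 1)
  have hLpow : ∀ n, L ^ (n + 1) ≤ G (n + 1) := by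
    intro n
    induction n with
    | zero => simpa using hL
    | succ n ih =>
      rw [pow_succ]
      exact le_trans (mul_le_mul' ih hL) (hGmul (n + 1) 1)
  have htt : (⊤ : Submodule F A) * ⊤ = ⊤ := by
    refine le_antisymm le_top fun x _ => ?_
    simpa using Submodule.mul_mem_mul (M := (⊤ : Submodule F A)) (N := (⊤ : Submodule F A))
      (mem_top) (mem_top (x := (1 : A)))
  have htopL : ⊤ * L ≤ L := by
    rw [hLdef, ← mul_assoc, htt]
  have hGKspan : G K * Submodule.span F {a} = ⊥ := by
    rw [eq_bot_iff]
    refine Submodule.mul_le.2 fun y hy z hz => ?_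
    obtain ⟨c, rfl⟩ := Submodule.mem_span_singleton.1 hz
    have hy0 : y * a = 0 := by
      have hker : G K ≤ LinearMap.ker (LinearMap.mulRight F a) :=
        iSup₂_le fun j hj => fun w hw => LinearMap.mem_ker.2 (hann j hj w hw)
      simpa using hker hy
    simp [mul_smul_comm, hy0]
  have hnil : L ^ (K + 1) = ⊥ := by
    rw [eq_bot_iff, pow_succ]
    have hLK : L ^ K ≤ G K := by
      have := hLpow (K - 1); rwa [Nat.sub_add_cancel hK] at this
    calc L ^ K * L = (L ^ K * ⊤) * Submodule.span F {a} := by rw [hLdef, mul_assoc]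
      _ ≤ G K * Submodule.span F {a} :=
        mul_le_mul_left (le_trans (mul_le_mul_left hLK _) (hmultop K)) _
      _ = ⊥ := hGKspan
  have hdown : ∀ k, 1 ≤ k → L ^ (k + 1) = ⊥ → L ^ k = ⊥ := by
    intro k hk hk1
    rw [eq_bot_iff]
    intro b hb
    rw [Submodule.mem_bot]
    refine hsemiprime b fun x => ?_
    have hxb : x * b ∈ L ^ k := by
      have h1 : ⊤ * L ^ k ≤ L ^ k := by
        conv_lhs => rw [show k = (k - 1) + 1 by omega, pow_succ']
        rw [← mul_assoc]
        rw [show k = (k - 1) + 1 by omega, pow_succ']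
        exact mul_le_mul_left htopL _
      exact h1 (Submodule.mul_mem_mul mem_top hb)
    have hmem : b * (x * b) ∈ L ^ k * L ^ k := Submodule.mul_mem_mul hb hxb
    rw [← pow_add] at hmem
    have he : k + k = (k + 1) + (k - 1) := by omega
    rw [he, pow_add, hk1, Submodule.bot_mul, Submodule.mem_bot] at hmem
    rw [mul_assoc]
    exact hmem
  have hiter : ∀ d, d ≤ K → L ^ (K + 1 - d) = ⊥ := by
    intro d
    induction d with
    | zero => intro _; simpa using hnil
    | succ d ih =>
      intro hd
      have h1 := ih (by omega)
      rw [show K + 1 - d = (K - d - 1 + 1) + 1 by omega] at h1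
      have h2 := hdown _ (by omega) h1
      rwa [show K + 1 - (d + 1) = K - d - 1 + 1 by omega]
  have hLbot : L = ⊥ := by
    have := hiter K le_rfl
    rwa [show K + 1 - K = 1 by omega, pow_one] at this
  have hxa : ∀ x : A, x * a = 0 := by
    intro x
    have : x * a ∈ L := Submodule.mul_mem_mul mem_top (Submodule.mem_span_singleton_self a)
    rwa [hLbot, Submodule.mem_bot] at this
  exact hsemiprime a fun x => by rw [mul_assoc, hxa x, mul_zero]

end AuxStmt11

/-- For a finitely generated graded semiprime algebra `A = ⊕ 𝒜 i` generated
over `F` by the components of degrees `1, …, p`, with growth function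
`γ n = dim_F ⊕_{i ≤ p n} 𝒜 i`, for all `m, t, N, s` with `t, s ≥ 1`:
`γ(m+t) - γ m ≤ (γ(N+s) - γ N) * (γ(N+m+t+s) - γ(N+m))`. -/
theorem stmt_11 {F A : Type*} [Field F] [Ring A] [Algebra F A]
    (𝒜 : ℕ → Submodule F A) [GradedAlgebra 𝒜]
    (hfd : ∀ i, FiniteDimensional F (𝒜 i))
    (p : ℕ) (hp : 1 ≤ p)
    (hgen : Algebra.adjoin F (⋃ i ∈ Set.Icc 1 p, (𝒜 i : Set A)) = ⊤)
    (hsemiprime : ∀ a : A, (∀ x : A, a * x * a = 0) → a = 0)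
    (γ : ℕ → ℕ)
    (hγ : ∀ n : ℕ, γ n = Module.finrank F (⨆ i ∈ Set.Iic (p * n), 𝒜 i : Submodule F A)) :
    ∀ m t N s : ℕ, 1 ≤ t → 1 ≤ s →
      γ (m + t) - γ m ≤ (γ (N + s) - γ N) * (γ (N + m + t + s) - γ (N + m)) := by
  classical
  haveI := hfd
  intro m t N s ht hs
  have hps : p * 1 ≤ p * s := Nat.mul_le_mul_left p hs
  have hγ' : ∀ n : ℕ, γ n = ∑ i ∈ Finset.Iic (p * n), Module.finrank F (𝒜 i) := by
    intro n
    have hsup : (⨆ i ∈ Set.Iic (p * n), 𝒜 i : Submodule F A) = (Finset.Iic (p * n)).sup 𝒜 := by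
      rw [Finset.sup_eq_iSup]
      exact le_antisymm
        (iSup₂_le fun i hi => le_iSup₂ (f := fun k (_ : k ∈ Finset.Iic (p * n)) => 𝒜 k) i
          (by simpa using hi))
        (iSup₂_le fun i hi => le_iSup₂ (f := fun k (_ : k ∈ Set.Iic (p * n)) => 𝒜 k) i
          (by simpa using hi))
    rw [hγ n, hsup, aux_rank_finset_sup 𝒜]
  have hdiff : ∀ a b : ℕ, a ≤ b →
      γ b - γ a = Module.finrank F ((Finset.Ioc (p * a) (p * b)).sup 𝒜 : Submodule F A) := by
    intro a b hab
    have hun : Finset.Iic (p * a) ∪ Finset.Ioc (p * a) (p * b) = Finset.Iic (p * b) := by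
      ext i
      simp only [Finset.mem_union, Finset.mem_Iic, Finset.mem_Ioc]
      have : p * a ≤ p * b := Nat.mul_le_mul_left p hab
      omega
    have hdis : Disjoint (Finset.Iic (p * a)) (Finset.Ioc (p * a) (p * b)) := by
      rw [Finset.disjoint_left]
      intro i hi1 hi2
      simp only [Finset.mem_Iic] at hi1
      simp only [Finset.mem_Ioc] at hi2
      omega
    rw [hγ' a, hγ' b, ← hun, Finset.sum_union hdis, aux_rank_finset_sup 𝒜]
    omega
  rw [hdiff m (m + t) (by omega), hdiff N (N + s) (by omega),
    hdiff (N + m) (N + m + t + s) (by omega)]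
  set V0 : Submodule F A := (Finset.Ioc (p * m) (p * (m + t))).sup 𝒜 with hV0
  set V1 : Submodule F A := (Finset.Ioc (p * N) (p * (N + s))).sup 𝒜 with hV1
  set V2 : Submodule F A := (Finset.Ioc (p * (N + m)) (p * (N + m + t + s))).sup 𝒜 with hV2
  have hmulmem : ∀ u ∈ V1, ∀ c ∈ V0, u * c ∈ V2 := by
    intro u hu c hc
    refine Submodule.mul_le.1 (aux_sup_mul_sup 𝒜 _ _ _ ?_) u hu c hc
    intro i hi j hj
    simp only [Finset.mem_Ioc, Nat.mul_add] at hi hj ⊢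
    omega
  set r := Module.finrank F V1 with hr
  let b : Basis (Fin r) F V1 := Module.finBasis F V1
  let T : V0 →ₗ[F] (Fin r → V2) :=
  { toFun := fun c i => ⟨(b i : A) * (c : A), hmulmem _ (SetLike.coe_mem _) _ (SetLike.coe_mem _)⟩
    map_add' := by intro c d; funext i; apply Subtype.ext; simp [mul_add]
    map_smul' := by intro e c; funext i; apply Subtype.ext; simp [mul_smul_comm] }
  have hinj : Function.Injective T := by
    rw [injective_iff_map_eq_zero]
    intro c hc
    have hbc : ∀ i, (b i : A) * (c : A) = 0 := by
      intro i
      exact Subtype.ext_iff.1 (congrFun hc i)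
    have hann1 : ∀ u ∈ V1, u * (c : A) = 0 := by
      intro u hu
      have hrepr : (u : A) = ∑ i, b.repr ⟨u, hu⟩ i • ((b i : A)) := by
        calc u = ((⟨u, hu⟩ : V1) : A) := rfl
        _ = _ := by
          conv_lhs => rw [← Module.Basis.sum_repr b ⟨u, hu⟩]
          simp [-Module.Basis.sum_repr]
    
      rw [hrepr, Finset.sum_mul]
      simp [smul_mul_assoc, hbc]
    have hwin : ∀ j, p * N + 1 ≤ j → j ≤ p * N + p → ∀ y ∈ 𝒜 j, y * (c : A) = 0 := by
      intro j h1 h2 y hy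
      have hjm : j ≤ p * (N + s) := by rw [Nat.mul_add]; omega
      have hsub : 𝒜 j ≤ V1 := Finset.le_sup (Finset.mem_Ioc.2 ⟨by omega, hjm⟩)
      exact hann1 y (hsub hy)
    have hstep : ∀ j, p * N + 1 ≤ j → ∀ y ∈ 𝒜 j, y * (c : A) = 0 := by
      intro j
      induction j using Nat.strong_induction_on with
      | _ j ih =>
        intro hj y hy
        rcases le_or_gt j (p * N + p) with h | h
        · exact hwin j hj h y hy
        · have hDj := aux_gen_decomp 𝒜 p hp hgen j (by omega)
          have hker : 𝒜 j ≤ LinearMap.ker (LinearMap.mulRight F (c : A)) := by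
            refine le_trans hDj (iSup₂_le fun k hk => Submodule.mul_le.2 fun w hw z hz => ?_)
            simp only [Finset.mem_Icc] at hk
            rw [LinearMap.mem_ker, LinearMap.mulRight_apply, mul_assoc,
              ih (j - k) (by omega) (by omega) z hz, mul_zero]
          simpa using hker hy
    have hc1 : (c : A) ∈ (⨆ i, ⨆ (_ : 1 ≤ i), 𝒜 i : Submodule F A) := by
      have hle : V0 ≤ ⨆ i, ⨆ (_ : 1 ≤ i), 𝒜 i :=
        Finset.sup_le fun i hi => le_iSup₂ (f := fun k (_ : 1 ≤ k) => 𝒜 k) i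
          (by simp only [Finset.mem_Ioc] at hi; omega)
      exact hle (SetLike.coe_mem c)
    have hc0 : (c : A) = 0 :=
      aux_semiprime_kill 𝒜 hsemiprime _ (p * N + 1) (by omega) hc1
        (fun j hj y hy => hstep j hj y hy)
    exact Subtype.ext hc0
  have hle := LinearMap.finrank_le_finrank_of_injective hinj
  have hpi : Module.finrank F (Fin r → V2) = r * Module.finrank F V2 := by
    rw [Module.finrank_pi_fintype F]
    simp [Finset.sum_const, Finset.card_univ]
  rw [hpi] at hle
  exact hle
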